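/- Fix z ∈ ℝ^p and k ∈ {1,…,p}. The maximum of Σ_{j=1}^p t_j² z_j² over t ∈ [0,1]^p subject to Σ_j t_j ≤ k equals the sum of the k largest values among z_1², …, z_p², and it is attained at the binary vector s that equals 1 exactly at indices of k largest |z_j| values. -/

import Mathlib

open BigOperators

/-- The maximum of `∑ t_j² z_j²` over `t ∈ [0,1]^p` with `∑ t_j ≤ k` equals the sum of
the `k` largest values among `z_j²`, attained at the binary indicator of a set of `k`
indices with largest `z_j²`. -/
theorem stmt17 {p : ℕ} (z : Fin p → ℝ) (k : ℕ) (hk1 : 1 ≤ k) (hkp : k ≤ p)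
    (A : Finset (Fin p)) (hA : A.card = k)
    (htop : ∀ i ∈ A, ∀ j, j ∉ A → z j ^ 2 ≤ z i ^ 2) :
    IsGreatest {x : ℝ | ∃ t : Fin p → ℝ, t ∈ Set.Icc (0 : Fin p → ℝ) 1 ∧
        (∑ j, t j) ≤ k ∧ x = ∑ j, t j ^ 2 * z j ^ 2} (∑ j ∈ A, z j ^ 2) ∧
    (∑ j, (if j ∈ A then (1 : ℝ) else 0) ^ 2 * z j ^ 2 = ∑ j ∈ A, z j ^ 2) := by
  have hattain : ∑ j, (if j ∈ A then (1 : ℝ) else 0) ^ 2 * z j ^ 2 = ∑ j ∈ A, z j ^ 2 := by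
    rw [← Finset.sum_subset (Finset.subset_univ A)]
    · apply Finset.sum_congr rfl
      intro j hj; simp [hj]
    · intro j _ hj; simp [hj]
  have hne : A.Nonempty := Finset.card_pos.mp (by omega)
  refine ⟨⟨⟨fun j => if j ∈ A then (1 : ℝ) else 0, ?_, ?_, hattain.symm⟩, ?_⟩, hattain⟩
  · constructor <;> intro j <;> by_cases hj : j ∈ A <;> simp [hj]
  · have : (∑ j, if j ∈ A then (1 : ℝ) else 0) = k := by
      rw [Finset.sum_ite_mem, Finset.univ_inter, Finset.sum_const, hA]; simp
    rw [this]
  · -- upper bound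
    rintro x ⟨t, ⟨ht0, ht1⟩, htk, rfl⟩
    have ht0' : ∀ j, 0 ≤ t j := fun j => ht0 j
    have ht1' : ∀ j, t j ≤ 1 := fun j => ht1 j
    set m : ℝ := A.inf' hne (fun i => z i ^ 2) with hm
    obtain ⟨i0, hi0, hmi0⟩ := A.exists_mem_eq_inf' hne (fun i => z i ^ 2)
    have hm0 : 0 ≤ m := by rw [hm, hmi0]; exact sq_nonneg (z i0)
    have hmA : ∀ i ∈ A, m ≤ z i ^ 2 := fun i hi => Finset.inf'_le _ hi
    have hmO : ∀ j, j ∉ A → z j ^ 2 ≤ m := by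
      intro j hj; rw [hm, hmi0]; exact htop i0 hi0 j hj
    -- step 1 : t² z² ≤ t z²
    have step1 : ∑ j, t j ^ 2 * z j ^ 2 ≤ ∑ j, t j * z j ^ 2 := by
      apply Finset.sum_le_sum
      intro j _
      have : t j ^ 2 ≤ t j := by nlinarith [ht0' j, ht1' j]
      exact mul_le_mul_of_nonneg_right this (sq_nonneg _)
    -- split
    have hsplit : ∑ j, t j * z j ^ 2 = ∑ j ∈ A, t j * z j ^ 2 + ∑ j ∈ Aᶜ, t j * z j ^ 2 :=
      (Finset.sum_add_sum_compl A _).symm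
    have hsplit' : ∑ j, t j = ∑ j ∈ A, t j + ∑ j ∈ Aᶜ, t j :=
      (Finset.sum_add_sum_compl A _).symm
    have hAc : ∑ j ∈ Aᶜ, t j * z j ^ 2 ≤ (∑ j ∈ Aᶜ, t j) * m := by
      rw [Finset.sum_mul]
      apply Finset.sum_le_sum
      intro j hj
      exact mul_le_mul_of_nonneg_left (hmO j (Finset.mem_compl.mp hj)) (ht0' j)
    have hAc2 : ∑ j ∈ Aᶜ, t j ≤ (k : ℝ) - ∑ j ∈ A, t j := by
      have := htk; rw [hsplit'] at this; linarith
    have key : ∑ j ∈ A, t j * z j ^ 2 + ((k : ℝ) - ∑ j ∈ A, t j) * m ≤ ∑ j ∈ A, z j ^ 2 := by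
      have hk' : (k : ℝ) = ∑ j ∈ A, (1 : ℝ) := by rw [Finset.sum_const, hA]; simp
      calc ∑ j ∈ A, t j * z j ^ 2 + ((k : ℝ) - ∑ j ∈ A, t j) * m
          = ∑ j ∈ A, (t j * z j ^ 2 + (1 - t j) * m) := by
            rw [hk', Finset.sum_add_distrib]
            congr 1
            rw [← Finset.sum_sub_distrib, Finset.sum_mul]
        _ ≤ ∑ j ∈ A, z j ^ 2 := by
            apply Finset.sum_le_sum
            intro j hj
            nlinarith [hmA j hj, ht0' j, ht1' j]
    calc ∑ j, t j ^ 2 * z j ^ 2 ≤ ∑ j, t j * z j ^ 2 := step1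
      _ = ∑ j ∈ A, t j * z j ^ 2 + ∑ j ∈ Aᶜ, t j * z j ^ 2 := hsplit
      _ ≤ ∑ j ∈ A, t j * z j ^ 2 + ((k : ℝ) - ∑ j ∈ A, t j) * m := by
          have h1 : ∑ j ∈ Aᶜ, t j * z j ^ 2 ≤ (∑ j ∈ Aᶜ, t j) * m := hAc
          have h2 : (∑ j ∈ Aᶜ, t j) * m ≤ ((k : ℝ) - ∑ j ∈ A, t j) * m :=
            mul_le_mul_of_nonneg_right hAc2 hm0
          linarith
      _ ≤ ∑ j ∈ A, z j ^ 2 := key
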